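/- If α is an impure inverting composition of length n, then α − (1,1,…,1) (subtracting 1 from every part, deleting resulting zero parts) is a pure inverting composition. -/

import Mathlib

/-- The largest part of a composition (0 for the empty composition). -/
def maxPart (α : List ℕ) : ℕ := α.foldr max 0

/-- A composition: a list of positive integers. -/
def IsComposition (α : List ℕ) : Prop := ∀ x ∈ α, 0 < x

/-- A composition is inverting if for each `i > 1` not exceeding the largest part,
there are indices `s < t` with `α_s = i` and `α_t = i - 1`. -/
def Inverting (α : List ℕ) : Prop :=
  ∀ i, 1 < i → i ≤ maxPart α →
    ∃ s t, s < t ∧ t < α.length ∧ α.getD s 0 = i ∧ α.getD t 0 = i - 1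

/-- The word `k^{e_{k-1}} ⋯ 2^{e_1} 1^{e_0}`, where `e_j` is the exponent of the value `j+1`. -/
def suffixWord (k : ℕ) (e : List ℕ) : List ℕ :=
  ((List.range k).reverse.map (fun j => List.replicate (e.getD j 0) (j + 1))).flatten

/-- `α = γ · k^{i_k} ⋯ 2^{i_2} 1^{i_1}` with all exponents `≥ 1` and `γ` containing
none of the values `1, …, k`. -/
def IsFactorization (α : List ℕ) (k : ℕ) (γ e : List ℕ) : Prop :=
  e.length = k ∧ (∀ x ∈ e, 1 ≤ x) ∧ (∀ v ∈ γ, ¬(1 ≤ v ∧ v ≤ k)) ∧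
  α = γ ++ suffixWord k e

/-- A factorization as above in which `k` is maximal. -/
def MaxFactorization (α : List ℕ) (k : ℕ) (γ e : List ℕ) : Prop :=
  IsFactorization α k γ e ∧ ∀ k' γ' e', IsFactorization α k' γ' e' → k' ≤ k

/-- A composition is pure if the maximal `k` in its factorization is even. -/
def PureComp (α : List ℕ) : Prop := ∃ k γ e, MaxFactorization α k γ e ∧ Even k

lemma suffixWord_zero (e : List ℕ) : suffixWord 0 e = [] := rfl

lemma suffixWord_succ (k : ℕ) (e : List ℕ) :
    suffixWord (k+1) e = List.replicate (e.getD k 0) (k+1) ++ suffixWord k e := by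
  simp [suffixWord, List.range_succ]

lemma mem_suffixWord {x k : ℕ} {e : List ℕ} (h : x ∈ suffixWord k e) : 1 ≤ x ∧ x ≤ k := by
  induction k with
  | zero => simp [suffixWord] at h
  | succ k ih =>
    rw [suffixWord_succ] at h
    rcases List.mem_append.1 h with h | h
    · rcases List.eq_of_mem_replicate h with rfl; omega
    · have := ih h; omega

lemma le_length_suffixWord {k : ℕ} {e : List ℕ} (hk : k ≤ e.length) (he : ∀ x ∈ e, 1 ≤ x) :
    k ≤ (suffixWord k e).length := by
  induction k with
  | zero => simp
  | succ k ih =>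
    rw [suffixWord_succ, List.length_append, List.length_replicate]
    have h1 : e.getD k 0 = e[k]'(by omega) := List.getD_eq_getElem e 0 (by omega)
    have h2 : 1 ≤ e.getD k 0 := h1 ▸ he _ (List.getElem_mem _)
    have := ih (by omega)
    omega

lemma map_add_one_suffixWord (k : ℕ) (e : List ℕ) (m : ℕ) :
    (suffixWord k e).map (fun x => x + 1) ++ List.replicate m 1 = suffixWord (k+1) (m :: e) := by
  induction k with
  | zero => rw [suffixWord_succ]; simp [suffixWord]
  | succ k ih =>
    rw [suffixWord_succ k e, List.map_append, List.map_replicate, List.append_assoc, ih,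
        suffixWord_succ (k+1) (m::e)]
    simp

lemma pair_sublist_of_index {l : List ℕ} {a b s t : ℕ} (hst : s < t) (ht : t < l.length)
    (ha : l.getD s 0 = a) (hb : l.getD t 0 = b) : [a, b].Sublist l := by
  have hs : s < l.length := lt_trans hst ht
  have ha' : a ∈ l.take t := by
    rw [List.getD_eq_getElem l 0 hs] at ha
    have hst' : s < (l.take t).length := by simp; omega
    have : (l.take t)[s]'hst' = l[s] := List.getElem_take
    rw [← ha, ← this]
    exact List.getElem_mem _
  have h1 : [a].Sublist (l.take t) := List.singleton_sublist.2 ha'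
  have h2 : [b].Sublist (l.drop t) := by
    rw [← List.getElem_cons_drop ht, ← List.getD_eq_getElem l 0 ht, hb]
    exact (List.nil_sublist _).cons₂ b
  have := h1.append h2
  rwa [List.take_append_drop] at this

lemma index_of_pair_sublist {l : List ℕ} {a b : ℕ} (h : [a, b].Sublist l) :
    ∃ s t, s < t ∧ t < l.length ∧ l.getD s 0 = a ∧ l.getD t 0 = b := by
  induction l with
  | nil => simp at h
  | cons c l ih =>
    cases h with
    | cons _ h' =>
      obtain ⟨s, t, hst, htl, hsa, htb⟩ := ih h'
      exact ⟨s+1, t+1, by omega, by simpa using htl, hsa, htb⟩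
    | cons_cons _ h' =>
      have hb : b ∈ l := List.singleton_sublist.1 h'
      obtain ⟨t, htl, htb⟩ := List.getElem_of_mem hb
      refine ⟨0, t+1, by omega, by simpa using htl, rfl, ?_⟩
      rw [List.getD_cons_succ, List.getD_eq_getElem l 0 htl]
      exact htb

lemma le_maxPart {x : ℕ} {l : List ℕ} (h : x ∈ l) : x ≤ maxPart l := by
  induction l with
  | nil => simp at h
  | cons c l ih =>
    rcases List.mem_cons.1 h with rfl | h
    · exact le_max_left _ _
    · exact le_trans (ih h) (le_max_right _ _)

lemma maxPart_mem {l : List ℕ} (h : 0 < maxPart l) : maxPart l ∈ l := by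
  induction l with
  | nil => simp [maxPart] at h
  | cons c l ih =>
    have hm : maxPart (c :: l) = max c (maxPart l) := rfl
    rcases le_total (maxPart l) c with hle | hle
    · rw [hm, max_eq_left hle]; exact List.mem_cons_self
    · rw [hm, max_eq_right hle]
      rw [hm, max_eq_right hle] at h
      exact List.mem_cons_of_mem _ (ih h)

lemma exists_maxFactorization (α : List ℕ) : ∃ k γ e, MaxFactorization α k γ e := by
  classical
  set P : ℕ → Prop := fun k => ∃ γ e, IsFactorization α k γ e with hPdef
  have h0 : P 0 :=
    ⟨α, [], rfl, by simp, fun v _ hv => by omega, by simp [suffixWord_zero]⟩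
  have hbound : ∀ k, P k → k ≤ α.length := by
    rintro k ⟨γ, e, hel, hee, _, hα⟩
    have h1 : k ≤ (suffixWord k e).length := le_length_suffixWord (le_of_eq hel.symm) hee
    have h2 := congrArg List.length hα
    rw [List.length_append] at h2
    omega
  have hPK : P (Nat.findGreatest P α.length) := Nat.findGreatest_spec (Nat.zero_le _) h0
  obtain ⟨γ, e, hf⟩ := hPK
  exact ⟨_, γ, e, hf, fun k' γ' e' hf' =>
    Nat.le_findGreatest (hbound k' ⟨γ', e', hf'⟩) ⟨γ', e', hf'⟩⟩

/-- If `α` is an impure inverting composition of length `n`, then subtracting `1` from every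
part and deleting zero parts yields a pure inverting composition. -/
theorem impure_sub_one (n : ℕ) (α : List ℕ) (hlen : α.length = n)
    (hc : IsComposition α) (hinv : Inverting α) (himp : ¬ PureComp α) :
    IsComposition ((α.map (fun x => x - 1)).filter (fun x => decide (0 < x))) ∧
    Inverting ((α.map (fun x => x - 1)).filter (fun x => decide (0 < x))) ∧
    PureComp ((α.map (fun x => x - 1)).filter (fun x => decide (0 < x))) := by
  set β := (α.map (fun x => x - 1)).filter (fun x => decide (0 < x)) with hβdef
  -- composition
  have hcβ : IsComposition β := by
    intro x hx
    rw [hβdef, List.mem_filter] at hx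
    simpa using hx.2
  -- inverting
  have hinvβ : Inverting β := by
    intro i hi1 hiM
    -- relate maxPart β to maxPart α
    have hMpos : 0 < maxPart β := lt_of_lt_of_le (by omega) hiM
    have hMmem : maxPart β ∈ β := maxPart_mem hMpos
    rw [hβdef, List.mem_filter, List.mem_map] at hMmem
    obtain ⟨⟨y, hy, hyM⟩, _⟩ := hMmem
    have hyα : i + 1 ≤ maxPart α := by
      have h1 : y ≤ maxPart α := le_maxPart hy
      have h2 : 0 < y := hc y hy
      have h3 : y - 1 = maxPart β := hyM
      omega
    obtain ⟨s, t, hst, htl, hsa, htb⟩ := hinv (i+1) (by omega) hyα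
    have hsub : [i+1, (i+1)-1].Sublist α := pair_sublist_of_index hst htl hsa htb
    have hsub2 : ([i+1, (i+1)-1].map (fun x => x - 1)).Sublist (α.map (fun x => x - 1)) :=
      hsub.map _
    have hsub3 := hsub2.filter (fun x => decide (0 < x))
    have heq : ([i+1, (i+1)-1].map (fun x => x - 1)).filter (fun x => decide (0 < x))
        = [i, i-1] := by
      have h1 : (i+1) - 1 = i := by omega
      have h2 : i - 1 ≠ 0 := by omega
      simp [h1]
      omega
    rw [heq] at hsub3
    exact index_of_pair_sublist hsub3
  -- pureness
  obtain ⟨K, γ, e, hmax⟩ := exists_maxFactorization α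
  have hodd : ¬ Even K := fun hK => himp ⟨K, γ, e, hmax, hK⟩
  obtain ⟨hfac, hmaxi⟩ := hmax
  obtain ⟨hel, hee, hγav, hα⟩ := hfac
  cases K with
  | zero => exact absurd Even.zero hodd
  | succ k =>
  have hkeven : Even k := by rwa [Nat.even_add_one, not_not] at hodd
  cases e with
  | nil => simp at hel
  | cons e₀ er =>
  have herl : er.length = k := by simpa using hel
  set δ := suffixWord k er with hδdef
  have hαexp : α = γ ++ (δ.map (fun x => x + 1) ++ List.replicate e₀ 1) := by
    rw [hα, map_add_one_suffixWord]
  have hγ2 : ∀ v ∈ γ, k + 2 ≤ v := by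
    intro v hv
    have h1 : 0 < v := hc v (hα ▸ List.mem_append_left _ hv)
    have h2 := hγav v hv
    omega
  -- compute β
  have hβ : β = γ.map (fun x => x - 1) ++ δ := by
    rw [hβdef, hαexp, List.map_append, List.map_append, List.filter_append, List.filter_append]
    have h1 : (γ.map (fun x => x - 1)).filter (fun x => decide (0 < x)) = γ.map (fun x => x - 1) := by
      apply List.filter_eq_self.mpr
      intro a ha
      rw [List.mem_map] at ha
      obtain ⟨v, hv, rfl⟩ := ha
      have := hγ2 v hv
      simp; omega
    have h2 : (δ.map (fun x => x + 1)).map (fun x => x - 1) = δ := by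
      rw [List.map_map]
      exact (List.map_congr_left (fun a _ => by simp)).trans (List.map_id δ)
    have h3 : δ.filter (fun x => decide (0 < x)) = δ :=
      List.filter_eq_self.mpr (fun a ha => by
        have := (mem_suffixWord (hδdef ▸ ha)).1; simp; omega)
    have h4 : ((List.replicate e₀ 1).map (fun x => x - 1)).filter (fun x => decide (0 < x))
        = [] := by rw [List.map_replicate]; norm_num
    rw [h2, h1, h3, h4, List.append_nil]
  have he₀ : 1 ≤ e₀ := hee e₀ List.mem_cons_self
  have hfβ : IsFactorization β k (γ.map (fun x => x - 1)) er := by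
    refine ⟨herl, fun x hx => hee x (List.mem_cons_of_mem _ hx), ?_, by rw [hβ, hδdef]⟩
    intro v hv
    rw [List.mem_map] at hv
    obtain ⟨w, hw, rfl⟩ := hv
    have := hγ2 w hw
    omega
  have hαβ : α = β.map (fun x => x + 1) ++ List.replicate e₀ 1 := by
    rw [hβ, List.map_append, List.map_map]
    have h1 : γ.map ((fun x => x + 1) ∘ (fun x => x - 1)) = γ := by
      rw [show γ.map ((fun x => x + 1) ∘ fun x => x - 1) = γ.map id from
        List.map_congr_left (fun a ha => by have := hγ2 a ha; simp; omega), List.map_id]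
    rw [h1, hαexp, List.append_assoc]
  have hmaxβ : ∀ k' γ' e', IsFactorization β k' γ' e' → k' ≤ k := by
    rintro k' γ' e' ⟨hel', hee', hγ'av, hβ'⟩
    have hγ'2 : ∀ v ∈ γ', k' + 1 ≤ v := by
      intro v hv
      have h1 : 0 < v := hcβ v (hβ' ▸ List.mem_append_left _ hv)
      have h2 := hγ'av v hv
      omega
    have hfα : IsFactorization α (k'+1) (γ'.map (fun x => x + 1)) (e₀ :: e') := by
      refine ⟨by simp [hel'], ?_, ?_, ?_⟩
      · intro x hx
        rcases List.mem_cons.1 hx with rfl | hx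
        · exact he₀
        · exact hee' x hx
      · intro v hv
        rw [List.mem_map] at hv
        obtain ⟨w, hw, rfl⟩ := hv
        have := hγ'2 w hw
        omega
      · rw [hαβ, hβ', List.map_append, List.append_assoc, map_add_one_suffixWord]
    have := hmaxi _ _ _ hfα
    omega
  exact ⟨hcβ, hinvβ, k, γ.map (fun x => x - 1), er, ⟨hfβ, hmaxβ⟩, hkeven⟩
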